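/- The set B₂ = ℝ \ A₂ is countable and nowhere dense in H(A₂), yet the space H(A₂) is not σ-compact. (Hence the implication 'H(A) σ-compact implies ℝ \ A countable and nowhere dense in H(A)' is not invertible.) -/

import Mathlib

open Set TopologicalSpace Topology

/-- The Hattori topology τ(A) on ℝ: generated by the Euclidean open sets together with
all sets [x, x+ε) with x ∈ ℝ \ A and ε > 0. -/
def hattori (A : Set ℝ) : TopologicalSpace ℝ :=
  TopologicalSpace.generateFrom
    ({s : Set ℝ | IsOpen s} ∪ {s : Set ℝ | ∃ x ∉ A, ∃ ε > 0, s = Set.Ico x (x + ε)})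

/-- `B₂`: the set of right endpoints of the closed intervals appearing in the standard
middle-thirds construction of the Cantor set. -/
def B2 : Set ℝ :=
  {x | ∃ n : ℕ, ∃ c : ℕ → ℝ, (∀ i, c i = 0 ∨ c i = 2) ∧
    x = (∑ i ∈ Finset.range n, c i / 3 ^ (i + 1)) + 1 / 3 ^ n}

/-- `A₂ = ℝ \ B₂`. -/
def A2 : Set ℝ := B2ᶜ

noncomputable section
open MeasureTheory

namespace HattoriAux

/-- extension of a finite boolean digit string to real digits in `{0,2}` -/
def ext (n : ℕ) (c : Fin n → Bool) : ℕ → ℝ :=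
  fun i => if h : i < n then (if c ⟨i, h⟩ then 2 else 0) else 0

lemma ext_apply (n : ℕ) (f : Fin n → Bool) (i : ℕ) (h : i < n) :
    ext n f i = if f ⟨i, h⟩ then 2 else 0 := dif_pos h

lemma ext_mem (n : ℕ) (c : Fin n → Bool) (i : ℕ) : ext n c i = 0 ∨ ext n c i = 2 := by
  unfold ext; split_ifs <;> simp

/-- left endpoint of a level-`n` interval -/
def lep (n : ℕ) (c : Fin n → Bool) : ℝ :=
  ∑ i ∈ Finset.range n, ext n c i / 3 ^ (i + 1)

/-- level-`n` approximation to the Cantor set -/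
def L (n : ℕ) : Set ℝ :=
  ⋃ c : Fin n → Bool, Set.Icc (lep n c) (lep n c + 1 / 3 ^ n)

/-- the Cantor set -/
def cant : Set ℝ := ⋂ n, L n

lemma closed_L (n : ℕ) : IsClosed (L n) :=
  isClosed_iUnion_of_finite fun _ => isClosed_Icc

lemma closed_cant : IsClosed cant := isClosed_iInter closed_L

lemma geom (a m : ℕ) :
    ∑ i ∈ Finset.Ico a (a + m), (2:ℝ) / 3 ^ (i + 1) = 1 / 3 ^ a - 1 / 3 ^ (a + m) := by
  induction m with
  | zero => simp
  | succ m ih =>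
    rw [← add_assoc, Finset.sum_Ico_succ_top (by omega), ih]
    have h3 : (3:ℝ) ^ (a + m + 1) = 3 ^ (a + m) * 3 := by ring
    field_simp
    ring

lemma dig_nonneg {c : ℕ → ℝ} (hc : ∀ i, c i = 0 ∨ c i = 2) (s : Finset ℕ) :
    0 ≤ ∑ i ∈ s, c i / 3 ^ (i + 1) := by
  apply Finset.sum_nonneg
  intro i _
  rcases hc i with h | h <;> rw [h] <;> positivity

lemma dig_le {c : ℕ → ℝ} (hc : ∀ i, c i = 0 ∨ c i = 2) (a m : ℕ) :
    ∑ i ∈ Finset.Ico a (a + m), c i / 3 ^ (i + 1) ≤ 1 / 3 ^ a - 1 / 3 ^ (a + m) := by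
  rw [← geom a m]
  apply Finset.sum_le_sum
  intro i _
  have h2 : c i ≤ 2 := by rcases hc i with h | h <;> rw [h] <;> norm_num
  gcongr


lemma sum_ext_eq {n : ℕ} (c : ℕ → ℝ) (hc : ∀ i, c i = 0 ∨ c i = 2)
    (m : ℕ) (hm : m ≤ n) (d : Fin m → Bool) (hd : ∀ i : Fin m, d i = decide (c i = 2)) :
    lep m d = ∑ i ∈ Finset.range m, c i / 3 ^ (i + 1) := by
  classical
  unfold lep
  apply Finset.sum_congr rfl
  intro i hi
  rw [Finset.mem_range] at hi
  unfold ext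
  rw [dif_pos hi, hd ⟨i, hi⟩]
  rcases hc i with h | h <;> simp [h]

lemma B2_subset_cant : B2 ⊆ cant := by
  classical
  rintro x ⟨n, c, hc, rfl⟩
  refine Set.mem_iInter.mpr fun m => ?_
  rcases le_or_gt m n with hmn | hnm
  · -- use truncation of c at m
    refine Set.mem_iUnion.mpr ⟨fun i => decide (c i = 2), ?_⟩
    have hl : lep m (fun i : Fin m => decide (c (i:ℕ) = 2)) =
        ∑ i ∈ Finset.range m, c i / 3 ^ (i + 1) :=
      sum_ext_eq c hc m hmn _ (fun i => rfl)
    rw [hl]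
    have hsplit : ∑ i ∈ Finset.range n, c i / 3 ^ (i + 1) =
        (∑ i ∈ Finset.range m, c i / 3 ^ (i + 1)) +
        ∑ i ∈ Finset.Ico m n, c i / 3 ^ (i + 1) := by
      simp only [Finset.range_eq_Ico]
      exact (Finset.sum_Ico_consecutive _ (Nat.zero_le m) hmn).symm
    constructor
    · rw [hsplit]
      have h1 := dig_nonneg hc (Finset.Ico m n)
      have h2 : (0:ℝ) < 1 / 3 ^ n := by positivity
      linarith
    · rw [hsplit]
      obtain ⟨k, rfl⟩ := Nat.exists_eq_add_of_le hmn
      have h1 := dig_le hc m k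
      linarith
  · -- m > n : x is a right endpoint at level m as well
    refine Set.mem_iUnion.mpr
      ⟨fun i => if h : (i:ℕ) < n then decide (c i = 2) else true, ?_⟩
    have hl : lep m (fun i : Fin m => if h : (i:ℕ) < n then decide (c (i:ℕ) = 2) else true) =
        (∑ i ∈ Finset.range n, c i / 3 ^ (i + 1)) + (1 / 3 ^ n - 1 / 3 ^ m) := by
      unfold lep
      rw [Finset.range_eq_Ico, ← Finset.sum_Ico_consecutive _ (Nat.zero_le n) hnm.le]
      have e1 : ∑ i ∈ Finset.Ico 0 n, ext m (fun i : Fin m =>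
          if h : (i:ℕ) < n then decide (c (i:ℕ) = 2) else true) i / 3 ^ (i + 1) =
          ∑ i ∈ Finset.range n, c i / 3 ^ (i + 1) := by
        rw [← Finset.range_eq_Ico]
        apply Finset.sum_congr rfl
        intro i hi
        rw [Finset.mem_range] at hi
        rw [ext_apply m _ i (lt_of_lt_of_le hi hnm.le)]
        simp only [dif_pos hi]
        rcases hc i with h | h <;> simp [h]
      have e2 : ∑ i ∈ Finset.Ico n m, ext m (fun i : Fin m =>
          if h : (i:ℕ) < n then decide (c (i:ℕ) = 2) else true) i / 3 ^ (i + 1) =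
          1 / 3 ^ n - 1 / 3 ^ m := by
        obtain ⟨k, rfl⟩ := Nat.exists_eq_add_of_le hnm.le
        rw [← geom n k]
        apply Finset.sum_congr rfl
        intro i hi
        rw [Finset.mem_Ico] at hi
        rw [ext_apply _ _ i hi.2]
        simp [Nat.not_lt.mpr hi.1]
      rw [e1, e2, Finset.range_eq_Ico]
    rw [hl]
    constructor
    · have : (0:ℝ) < 1 / 3 ^ m := by positivity
      have h3 : (1:ℝ) / 3 ^ m ≤ 1 / 3 ^ n := by
        gcongr <;> first | norm_num | exact hnm.le
      linarith
    · linarith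

lemma one_mem_B2 : (1:ℝ) ∈ B2 := ⟨0, fun _ => 0, fun _ => Or.inl rfl, by simp⟩

lemma vol_cant : volume cant = 0 := by
  have key : ∀ n : ℕ, volume cant ≤ ENNReal.ofReal ((2/3) ^ n) := by
    intro n
    have h1 : volume cant ≤ volume (L n) := measure_mono (Set.iInter_subset _ n)
    have h2 : volume (L n) ≤ ∑ c : Fin n → Bool, volume
        (Set.Icc (lep n c) (lep n c + 1 / 3 ^ n)) := measure_iUnion_fintype_le _ _
    have h3 : ∀ c : Fin n → Bool, volume (Set.Icc (lep n c) (lep n c + 1 / 3 ^ n)) =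
        ENNReal.ofReal (1 / 3 ^ n) := by
      intro c; rw [Real.volume_Icc]; ring_nf
    rw [Finset.sum_congr rfl (fun c _ => h3 c), Finset.sum_const] at h2
    have hcard : (Finset.univ : Finset (Fin n → Bool)).card = 2 ^ n := by
      simp [Finset.card_univ]
    rw [hcard, nsmul_eq_mul] at h2
    refine le_trans h1 (le_trans h2 (le_of_eq ?_))
    have hcast : ((2 ^ n : ℕ) : ENNReal) = ENNReal.ofReal ((2:ℝ) ^ n) := by
      rw [ENNReal.ofReal_pow (by norm_num : (0:ℝ) ≤ 2)]
      norm_num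
    rw [hcast, ← ENNReal.ofReal_mul (by positivity)]
    congr 1
    rw [div_pow, mul_one_div]
  have hlim : Filter.Tendsto (fun n : ℕ => ENNReal.ofReal ((2/3) ^ n))
      Filter.atTop (nhds 0) := by
    rw [show (0 : ENNReal) = ENNReal.ofReal 0 by simp]
    exact (ENNReal.continuous_ofReal.tendsto 0).comp
      (tendsto_pow_atTop_nhds_zero_of_lt_one (by norm_num) (by norm_num))
  exact le_antisymm (ge_of_tendsto' hlim key) (zero_le)

lemma exists_not_cant {y ρ : ℝ} (h : y < ρ) : ∃ w, w ∈ Set.Ioo y ρ ∧ w ∉ cant := by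
  by_contra hcon
  push_neg at hcon
  have hsub : Set.Ioo y ρ ⊆ cant := fun w hw => hcon w hw
  have := measure_mono (μ := volume) hsub
  rw [Real.volume_Ioo, vol_cant] at this
  have := ENNReal.ofReal_pos.mpr (sub_pos.mpr h)
  exact absurd (le_antisymm ‹_› (zero_le)) (ne_of_gt ‹_›)


lemma lep_sub_int (n : ℕ) (d : Fin n → Bool) (c : ℕ → ℝ) (hc : ∀ i, c i = 0 ∨ c i = 2) :
    ∃ K : ℤ, lep n d - ∑ i ∈ Finset.range n, c i / 3 ^ (i + 1) = K * (2 / 3 ^ n) := by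
  classical
  -- integer digits
  set k : ℕ → ℤ := fun i => (if ext n d i = 2 then 1 else 0) - (if c i = 2 then 1 else 0) with hk
  refine ⟨∑ i ∈ Finset.range n, k i * 3 ^ (n - 1 - i), ?_⟩
  unfold lep
  rw [← Finset.sum_sub_distrib]
  push_cast
  rw [Finset.sum_mul]
  apply Finset.sum_congr rfl
  intro i hi
  rw [Finset.mem_range] at hi
  have hpow : (3:ℝ) ^ (n - 1 - i) * 3 ^ (i + 1) = 3 ^ n := by
    rw [← pow_add]
    congr 1
    omega
  have hdig : ext n d i - c i = 2 * (k i : ℝ) := by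
    rw [hk]
    rcases ext_mem n d i with h1 | h1 <;> rcases hc i with h2 | h2 <;>
      simp [h1, h2] <;> norm_num
  rw [div_sub_div_same, hdig]
  have h3 : (3:ℝ) ^ (i + 1) ≠ 0 := by positivity
  have h3n : (3:ℝ) ^ n ≠ 0 := by positivity
  field_simp
  rw [← hpow]
  ring

lemma gap (n : ℕ) (c : ℕ → ℝ) (hc : ∀ i, c i = 0 ∨ c i = 2) :
    Set.Ioo ((∑ i ∈ Finset.range n, c i / 3 ^ (i + 1)) + 1 / 3 ^ n)
      (((∑ i ∈ Finset.range n, c i / 3 ^ (i + 1)) + 1 / 3 ^ n) + 1 / 3 ^ n) ∩ cant = ∅ := by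
  set t : ℝ := ∑ i ∈ Finset.range n, c i / 3 ^ (i + 1) with ht
  rw [Set.eq_empty_iff_forall_notMem]
  rintro x ⟨hx1, hx2⟩
  have hxL : x ∈ L n := Set.mem_iInter.mp hx2 n
  obtain ⟨d, hd⟩ := Set.mem_iUnion.mp hxL
  obtain ⟨K, hK⟩ := lep_sub_int n d c hc
  rw [Set.mem_Ioo] at hx1
  have hpos : (0:ℝ) < 1 / 3 ^ n := by positivity
  have h1 : t < lep n d := by
    have := hd.2
    have := hx1.1
    linarith
  have h2 : lep n d < t + 2 / 3 ^ n := by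
    have := hd.1
    have := hx1.2
    have h2e : (2:ℝ) / 3 ^ n = 1 / 3 ^ n + 1 / 3 ^ n := by ring
    linarith
  have hq : (0:ℝ) < 2 / 3 ^ n := by positivity
  have h1' : 0 < (K:ℝ) * (2 / 3 ^ n) := by rw [← hK]; linarith
  have h2' : (K:ℝ) * (2 / 3 ^ n) < 2 / 3 ^ n := by rw [← hK]; linarith
  have hK0 : (0:ℝ) < (K : ℝ) := by nlinarith
  have hK1 : ((K : ℝ)) < 1 := by nlinarith
  have : (0:ℤ) < K := by exact_mod_cast hK0
  have : (K:ℤ) < 1 := by exact_mod_cast hK1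
  omega


lemma hattori_isOpen_of_isOpen {A s : Set ℝ} (hs : IsOpen s) :
    IsOpen[hattori A] s :=
  isOpen_generateFrom_of_mem (Or.inl hs)

lemma hattori_isOpen_Ico {A : Set ℝ} {x ε : ℝ} (hx : x ∉ A) (hε : 0 < ε) :
    IsOpen[hattori A] (Set.Ico x (x + ε)) :=
  isOpen_generateFrom_of_mem (Or.inr ⟨x, hx, ε, hε, rfl⟩)

lemma hattori_isClosed {A s : Set ℝ} (hs : IsClosed s) :
    IsClosed[hattori A] s :=
  (@isOpen_compl_iff ℝ s (hattori A)).mp (hattori_isOpen_of_isOpen hs.isOpen_compl)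

lemma hattori_continuous_id (A : Set ℝ) :
    Continuous[hattori A, inferInstance] (id : ℝ → ℝ) := by
  rw [continuous_def]
  intro U hU
  exact hattori_isOpen_of_isOpen hU

lemma hattori_compact_euclid {A K : Set ℝ} (h : @IsCompact ℝ (hattori A) K) :
    IsCompact K := by
  have := @IsCompact.image ℝ ℝ (hattori A) _ K id h (hattori_continuous_id A)
  rwa [Set.image_id] at this

lemma hattori_exists_Ico {A U : Set ℝ} (hU : IsOpen[hattori A] U) :
    ∀ x ∈ U, ∃ ε > 0, Set.Ico x (x + ε) ⊆ U := by
  have hU' : TopologicalSpace.GenerateOpen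
      ({s : Set ℝ | IsOpen s} ∪ {s : Set ℝ | ∃ x ∉ A, ∃ ε > 0, s = Set.Ico x (x + ε)}) U := hU
  clear hU
  induction hU' with
  | basic s hs =>
    rcases hs with hs | ⟨x', hx', ε', hε', rfl⟩
    · replace hs : IsOpen s := hs
      intro x hx
      obtain ⟨ε, hε, hball⟩ := Metric.isOpen_iff.mp hs x hx
      refine ⟨ε, hε, fun y hy => hball ?_⟩
      rw [Metric.mem_ball, Real.dist_eq, abs_lt]
      cases' hy with h1 h2
      constructor <;> linarith
    · intro x hx
      rw [Set.mem_Ico] at hx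
      refine ⟨x' + ε' - x, by linarith [hx.1, hx.2], fun y hy => ?_⟩
      rw [Set.mem_Ico] at hy ⊢
      constructor <;> linarith [hx.1, hy.1, hy.2]
  | univ => exact fun x _ => ⟨1, one_pos, fun y _ => Set.mem_univ y⟩
  | inter s t _ _ ihs iht =>
    intro x hx
    obtain ⟨ε1, hε1, h1⟩ := ihs x hx.1
    obtain ⟨ε2, hε2, h2⟩ := iht x hx.2
    refine ⟨min ε1 ε2, lt_min hε1 hε2, fun y hy => ?_⟩
    rw [Set.mem_Ico] at hy
    exact ⟨h1 ⟨hy.1, lt_of_lt_of_le hy.2 (by linarith [min_le_left ε1 ε2])⟩,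
      h2 ⟨hy.1, lt_of_lt_of_le hy.2 (by linarith [min_le_right ε1 ε2])⟩⟩
  | sUnion S _ ih =>
    rintro x ⟨s, hsS, hxs⟩
    obtain ⟨ε, hε, h⟩ := ih s hsS x hxs
    exact ⟨ε, hε, fun y hy => ⟨s, hsS, h hy⟩⟩


lemma mem_B2_aux (n j : ℕ) (c : ℕ → ℝ) (hc : ∀ i, c i = 0 ∨ c i = 2) :
    (∑ i ∈ Finset.range n, c i / 3 ^ (i + 1)) + 1 / 3 ^ n - 2 / 3 ^ (n + j + 1) ∈ B2 := by
  classical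
  set d : ℕ → ℝ := fun i => if i < n then c i else if i < n + j then 2 else 0 with hd
  refine ⟨n + j + 1, d, ?_, ?_⟩
  · intro i
    rw [hd]
    simp only []
    split_ifs with h1 h2
    · exact hc i
    · exact Or.inr rfl
    · exact Or.inl rfl
  · rw [Finset.sum_range_succ]
    have hdnj : d (n + j) = 0 := by rw [hd]; simp
    have hsplit : ∑ i ∈ Finset.range (n + j), d i / 3 ^ (i + 1) =
        (∑ i ∈ Finset.Ico 0 n, d i / 3 ^ (i + 1)) +
        ∑ i ∈ Finset.Ico n (n + j), d i / 3 ^ (i + 1) := by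
      rw [Finset.range_eq_Ico]
      exact (Finset.sum_Ico_consecutive _ (Nat.zero_le n) (by omega)).symm
    have e1 : ∑ i ∈ Finset.Ico 0 n, d i / 3 ^ (i + 1) =
        ∑ i ∈ Finset.range n, c i / 3 ^ (i + 1) := by
      rw [← Finset.range_eq_Ico]
      apply Finset.sum_congr rfl
      intro i hi
      rw [Finset.mem_range] at hi
      rw [hd]
      simp [hi]
    have e2 : ∑ i ∈ Finset.Ico n (n + j), d i / 3 ^ (i + 1) =
        1 / 3 ^ n - 1 / 3 ^ (n + j) := by
      rw [← geom n j]
      apply Finset.sum_congr rfl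
      intro i hi
      rw [Finset.mem_Ico] at hi
      rw [hd]
      simp [Nat.not_lt.mpr hi.1, hi.2]
    rw [hsplit, e1, e2, hdnj]
    have h1 : (3:ℝ) ^ (n + j + 1) = 3 ^ (n + j) * 3 := by ring
    have h2 : (3:ℝ) ^ (n + j) ≠ 0 := by positivity
    field_simp
    ring


lemma not_hattori_compact (n : ℕ) (c : ℕ → ℝ) (hc : ∀ i, c i = 0 ∨ c i = 2) :
    ¬ @IsCompact ℝ (hattori A2) (cant ∩
      Set.Icc (∑ i ∈ Finset.range n, c i / 3 ^ (i + 1))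
        ((∑ i ∈ Finset.range n, c i / 3 ^ (i + 1)) + 1 / 3 ^ n)) := by
  classical
  intro hcomp
  set t : ℝ := ∑ i ∈ Finset.range n, c i / 3 ^ (i + 1) with ht
  set ρ : ℝ := t + 1 / 3 ^ n with hρ
  set D : Set ℝ := cant ∩ Set.Icc t ρ with hD
  have hρB2 : ρ ∈ B2 := ⟨n, c, hc, rfl⟩
  have h3n : (0:ℝ) < 1 / 3 ^ n := by positivity
  have htρ : t < ρ := by rw [hρ]; linarith
  have hgex : ∀ y : ℝ, ∃ ε : ℝ, 0 < ε ∧ (y ∈ B2 → Set.Ioo y (y + ε) ∩ cant = ∅) := by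
    intro y
    by_cases hy : y ∈ B2
    · obtain ⟨m, c', hc', rfl⟩ := hy
      exact ⟨1 / 3 ^ m, by positivity, fun _ => gap m c' hc'⟩
    · exact ⟨1, one_pos, fun h => absurd h hy⟩
  choose g hg using hgex
  have hsex : ∀ y : ℝ, ∃ w : ℝ, y < ρ → (w ∈ Set.Ioo y ρ ∧ w ∉ cant) := by
    intro y
    by_cases hy : y < ρ
    · obtain ⟨w, hw⟩ := exists_not_cant hy
      exact ⟨w, fun _ => hw⟩
    · exact ⟨0, fun h => absurd h hy⟩
  choose s hs using hsex
  set W : ℝ → Set ℝ := fun y =>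
    if y ∈ B2 then Set.Ico y (y + g y)
    else if y ∈ D then Set.Ioo (y - 1) (s y) else ∅ with hW
  have hWopen : ∀ y, IsOpen[hattori A2] (W y) := by
    intro y
    rw [hW]; simp only []
    split_ifs with h1 h2
    · exact hattori_isOpen_Ico (by simp [A2, h1]) (hg y).1
    · exact hattori_isOpen_of_isOpen isOpen_Ioo
    · exact hattori_isOpen_of_isOpen isOpen_empty
  have hDlt : ∀ y, y ∈ D → y ∉ B2 → y < ρ := by
    intro y hy hyB
    rcases lt_or_eq_of_le (hy.2.2 : y ≤ ρ) with h | h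
    · exact h
    · exact absurd (h ▸ hρB2) hyB
  have hcover : D ⊆ ⋃ y : ℝ, W y := by
    intro x hx
    refine Set.mem_iUnion.mpr ⟨x, ?_⟩
    rw [hW]; simp only []
    by_cases h1 : x ∈ B2
    · rw [if_pos h1]
      exact ⟨le_refl x, by linarith [(hg x).1]⟩
    · rw [if_neg h1, if_pos hx]
      have hxρ : x < ρ := hDlt x hx h1
      have hsx := (hs x hxρ).1
      exact ⟨by linarith [hsx.1], hsx.1⟩
  obtain ⟨F, hF⟩ := @IsCompact.elim_finite_subcover ℝ (hattori A2) D ℝ hcomp W hWopen hcover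
  set G : Finset ℝ := insert t ((F.filter (fun y => y ∈ D ∧ y ∉ B2)).image s) with hG
  have hGne : G.Nonempty := ⟨t, Finset.mem_insert_self _ _⟩
  set S : ℝ := G.max' hGne with hS
  have hSρ : S < ρ := by
    rw [hS, Finset.max'_lt_iff]
    intro y hy
    rw [hG, Finset.mem_insert] at hy
    rcases hy with rfl | hy
    · exact htρ
    · obtain ⟨z, hz, rfl⟩ := Finset.mem_image.mp hy
      obtain ⟨hzF, hzD, hzB⟩ := Finset.mem_filter.mp hz
      exact (hs z (hDlt z hzD hzB)).1.2
  have hhalf : (0:ℝ) < (ρ - S) / 2 := half_pos (sub_pos.mpr hSρ)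
  obtain ⟨m0, hm0⟩ := exists_pow_lt_of_lt_one hhalf (show (1:ℝ)/3 < 1 by norm_num)
  set f : ℕ → ℝ := fun j => ρ - 2 / 3 ^ (n + (m0 + j) + 1) with hf
  have hfval : ∀ j, f j = t + 1 / 3 ^ n - 2 / 3 ^ (n + (m0 + j) + 1) := by
    intro j
    simp only [hf, hρ]
  have hfB2 : ∀ j, f j ∈ B2 := by
    intro j; rw [hfval j]; exact mem_B2_aux n (m0 + j) c hc
  have hflt : ∀ j, 0 < 2 / (3:ℝ) ^ (n + (m0 + j) + 1) := by intro j; positivity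
  have hfbound : ∀ j, 2 / (3:ℝ) ^ (n + (m0 + j) + 1) ≤ 1 / 3 ^ n := by
    intro j
    have h1 : (1:ℝ) / 3 ^ (n + (m0 + j) + 1) ≤ 1 / 3 ^ (n + 1) :=
      one_div_pow_le_one_div_pow_of_le (by norm_num) (by omega)
    have h2 : (3:ℝ) ^ (n + 1) = 3 ^ n * 3 := by ring
    have h3 : (0:ℝ) < 3 ^ n := by positivity
    have h4 : (1:ℝ) / (3 ^ n * 3) = (1 / 3 ^ n) / 3 := by ring
    have h5 : 2 / (3:ℝ) ^ (n + (m0 + j) + 1) = 2 * (1 / 3 ^ (n + (m0 + j) + 1)) := by ring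
    rw [h5]
    calc 2 * ((1:ℝ) / 3 ^ (n + (m0 + j) + 1)) ≤ 2 * (1 / 3 ^ (n + 1)) := by linarith
      _ = 2 * (1 / 3 ^ n) / 3 := by rw [h2]; ring
      _ ≤ 1 / 3 ^ n := by linarith
  have hfS : ∀ j, S < f j := by
    intro j
    have h1 : (1:ℝ) / 3 ^ (n + (m0 + j) + 1) ≤ 1 / 3 ^ m0 :=
      one_div_pow_le_one_div_pow_of_le (by norm_num) (by omega)
    have h2 : ((1:ℝ)/3) ^ m0 = 1 / 3 ^ m0 := by rw [div_pow, one_pow]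
    have h3 : 2 / (3:ℝ) ^ (n + (m0 + j) + 1) = 2 * (1 / 3 ^ (n + (m0 + j) + 1)) := by ring
    rw [hf]
    rw [h2] at hm0
    have : 2 / (3:ℝ) ^ (n + (m0 + j) + 1) < ρ - S := by
      rw [h3]; linarith
    linarith
  have hfD : ∀ j, f j ∈ D := by
    intro j
    refine ⟨B2_subset_cant (hfB2 j), ?_, ?_⟩
    · rw [hfval j]
      have := hfbound j
      linarith
    · rw [hf]
      have := hflt j
      linarith
  set E : Set ℝ := D ∩ Set.Ioc S ρ with hE
  have hfE : ∀ j, f j ∈ E := by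
    intro j
    refine ⟨hfD j, hfS j, ?_⟩
    rw [hf]
    have := hflt j
    linarith
  have hfinj : Function.Injective f := by
    have hSM : StrictMono f := by
      intro a b hab
      rw [hf]
      simp only []
      have : (1:ℝ) / 3 ^ (n + (m0 + b) + 1) < 1 / 3 ^ (n + (m0 + a) + 1) :=
        one_div_pow_lt_one_div_pow_of_lt (by norm_num) (by omega)
      have e1 : 2 / (3:ℝ) ^ (n + (m0 + a) + 1) = 2 * (1 / 3 ^ (n + (m0 + a) + 1)) := by ring
      have e2 : 2 / (3:ℝ) ^ (n + (m0 + b) + 1) = 2 * (1 / 3 ^ (n + (m0 + b) + 1)) := by ring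
      rw [e1, e2] at *
      linarith
    exact hSM.injective
  have hEinf : E.Infinite := Set.infinite_of_injective_forall_mem hfinj hfE
  have hEF : E ⊆ ↑F := by
    intro e he
    obtain ⟨y, hyF, hyW⟩ := Set.mem_iUnion₂.mp (hF he.1)
    rw [hW] at hyW
    simp only [] at hyW
    by_cases h1 : y ∈ B2
    · rw [if_pos h1] at hyW
      rcases eq_or_lt_of_le hyW.1 with heq | hlt
      · rw [← heq]; exact hyF
      · exfalso
        have : e ∈ Set.Ioo y (y + g y) ∩ cant := ⟨⟨hlt, hyW.2⟩, he.1.1⟩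
        rw [(hg y).2 h1] at this
        exact this
    · rw [if_neg h1] at hyW
      by_cases h2 : y ∈ D
      · rw [if_pos h2] at hyW
        exfalso
        have hsy : s y ≤ S := by
          rw [hS]
          apply Finset.le_max'
          rw [hG]
          exact Finset.mem_insert_of_mem
            (Finset.mem_image_of_mem s (Finset.mem_filter.mpr ⟨hyF, h2, h1⟩))
        have : e < s y := hyW.2
        have : S < e := he.2.1
        linarith
      · rw [if_neg h2] at hyW
        exact absurd hyW (Set.notMem_empty e)
  exact hEinf (F.finite_toSet.subset hEF)


lemma B2_countable : B2.Countable := by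
  apply Set.Countable.mono _ (Set.countable_range ((↑) : ℚ → ℝ))
  rintro x ⟨n, c, hc, rfl⟩
  classical
  refine ⟨(∑ i ∈ Finset.range n, (if c i = 2 then (2:ℚ) else 0) / 3 ^ (i + 1)) + 1 / 3 ^ n, ?_⟩
  push_cast
  congr 1
  apply Finset.sum_congr rfl
  intro i _
  rcases hc i with h | h <;> simp [h]

lemma B2_nowhereDense : @IsNowhereDense ℝ (hattori A2) B2 := by
  have hsub : @closure ℝ (hattori A2) B2 ⊆ cant :=
    @closure_minimal ℝ (hattori A2) B2 cant B2_subset_cant (hattori_isClosed closed_cant)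
  show @interior ℝ (hattori A2) (@closure ℝ (hattori A2) B2) = ∅
  rw [Set.eq_empty_iff_forall_notMem]
  intro x hx
  have hop : IsOpen[hattori A2] (@interior ℝ (hattori A2) (@closure ℝ (hattori A2) B2)) :=
    @isOpen_interior ℝ (hattori A2) _
  obtain ⟨ε, hε, hIco⟩ := hattori_exists_Ico hop x hx
  have hints : @interior ℝ (hattori A2) (@closure ℝ (hattori A2) B2) ⊆
      @closure ℝ (hattori A2) B2 := @interior_subset ℝ (hattori A2) _
  have hIc : Set.Ico x (x + ε) ⊆ cant :=
    fun y hy => hsub (hints (hIco hy))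
  have := measure_mono (μ := volume) hIc
  rw [Real.volume_Ico, vol_cant] at this
  have h2 : ENNReal.ofReal (x + ε - x) = ENNReal.ofReal ε := by ring_nf
  rw [h2] at this
  have := ENNReal.ofReal_pos.mpr hε
  exact absurd (le_antisymm ‹_› (zero_le)) (ne_of_gt ‹_›)

lemma not_sigmaCompact : ¬ @SigmaCompactSpace ℝ (hattori A2) := by
  intro h
  obtain ⟨K, hKc, hKU⟩ := @SigmaCompactSpace.isSigmaCompact_univ ℝ (hattori A2) h
  -- each piece is compact, hence closed, for the Euclidean topology
  have hKe : ∀ m, IsCompact (K m) := fun m => hattori_compact_euclid (hKc m)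
  haveI : CompleteSpace ↥cant := closed_cant.completeSpace_coe
  have hclosed : ∀ m : ℕ, IsClosed ((Subtype.val : ↥cant → ℝ) ⁻¹' K m) :=
    fun m => ((hKe m).isClosed).preimage continuous_subtype_val
  have huniv : ⋃ m, ((Subtype.val : ↥cant → ℝ) ⁻¹' K m) = Set.univ := by
    rw [← Set.preimage_iUnion, hKU, Set.preimage_univ]
  haveI : Nonempty ↥cant := ⟨⟨1, B2_subset_cant one_mem_B2⟩⟩
  obtain ⟨m, x, hx⟩ := nonempty_interior_of_iUnion_of_closed hclosed huniv
  rw [mem_interior_iff_mem_nhds, Metric.mem_nhds_iff] at hx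
  obtain ⟨ε, hε, hball⟩ := hx
  obtain ⟨ℓ, hℓ⟩ := exists_pow_lt_of_lt_one hε (show (1:ℝ)/3 < 1 by norm_num)
  have hx2 : (x : ℝ) ∈ L ℓ := Set.mem_iInter.mp x.2 ℓ
  obtain ⟨d, hd⟩ := Set.mem_iUnion.mp hx2
  have hpow : ((1:ℝ)/3) ^ ℓ = 1 / 3 ^ ℓ := by rw [div_pow, one_pow]
  rw [hpow] at hℓ
  -- the sub-Cantor set sits inside K m
  have hsubK : cant ∩ Set.Icc (lep ℓ d) (lep ℓ d + 1 / 3 ^ ℓ) ⊆ K m := by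
    rintro y ⟨hy1, hy2⟩
    have hdist : dist (⟨y, hy1⟩ : ↥cant) x < ε := by
      rw [Subtype.dist_eq, Real.dist_eq, abs_lt]
      constructor
      · have := hd.2; have := hy2.1; linarith
      · have := hd.1; have := hy2.2; linarith
    exact hball hdist
  have hDcl : IsClosed[hattori A2] (cant ∩ Set.Icc (lep ℓ d) (lep ℓ d + 1 / 3 ^ ℓ)) :=
    hattori_isClosed (closed_cant.inter isClosed_Icc)
  have hDcomp : @IsCompact ℝ (hattori A2)
      (cant ∩ Set.Icc (lep ℓ d) (lep ℓ d + 1 / 3 ^ ℓ)) :=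
    @IsCompact.of_isClosed_subset ℝ (hattori A2) _ _ (hKc m) hDcl hsubK
  exact not_hattori_compact ℓ (ext ℓ d) (ext_mem ℓ d) hDcomp

end HattoriAux


/-- B₂ = ℝ \ A₂ is countable and nowhere dense in H(A₂), yet H(A₂) is not σ-compact. -/
theorem B2_countable_nowhereDense_but_not_sigmaCompact :
    B2.Countable ∧ @IsNowhereDense ℝ (hattori A2) B2 ∧
    ¬ @SigmaCompactSpace ℝ (hattori A2) := by
  exact ⟨HattoriAux.B2_countable, HattoriAux.B2_nowhereDense, HattoriAux.not_sigmaCompact⟩
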